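/- Let G be a finite simple graph with no isolated vertices, n vertices, m edges, minimum degree δ and maximum degree Δ. Then R(G) ≥ n/2 − (m/2)·(1/√δ − 1/√Δ)², with equality if and only if every edge uv of G satisfies {d_u, d_v} = {δ, Δ} (i.e., G is regular or biregular). -/

import Mathlib

open Finset

variable {V : Type*}

/-- Randić index: `Σ_{uv∈E} (d_u d_v)^{-1/2}`, written as half a double sum over vertices. -/
noncomputable def randicIndex [Fintype V] (G : SimpleGraph V) [DecidableRel G.Adj] : ℝ :=
  (1 / 2) * ∑ u, ∑ v ∈ G.neighborFinset u,
    1 / Real.sqrt ((G.degree u : ℝ) * (G.degree v : ℝ))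

private lemma interval_diff_sq {lo hi a b : ℝ} (h1 : lo ≤ a) (h2 : a ≤ hi)
    (h3 : lo ≤ b) (h4 : b ≤ hi) :
    (a - b)^2 ≤ (hi - lo)^2 ∧
      ((a - b)^2 = (hi - lo)^2 ↔ (a = hi ∧ b = lo) ∨ (a = lo ∧ b = hi)) := by
  constructor
  · apply sq_le_sq' <;> linarith
  · constructor
    · intro h
      have hf : (a - b - (hi - lo)) * (a - b + (hi - lo)) = 0 := by linear_combination h
      rcases mul_eq_zero.mp hf with hf | hf
      · exact Or.inl ⟨by linarith, by linarith⟩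
      · exact Or.inr ⟨by linarith, by linarith⟩
    · rintro (⟨rfl, rfl⟩ | ⟨rfl, rfl⟩) <;> ring

private lemma sum_adj_comm [Fintype V] (G : SimpleGraph V) [DecidableRel G.Adj]
    (f : V → V → ℝ) :
    ∑ u, ∑ v ∈ G.neighborFinset u, f u v = ∑ u, ∑ v ∈ G.neighborFinset u, f v u := by
  classical
  simp only [SimpleGraph.neighborFinset_eq_filter, Finset.sum_filter]
  rw [Finset.sum_comm]
  refine Finset.sum_congr rfl fun u _ => Finset.sum_congr rfl fun v _ => ?_
  by_cases h : G.Adj u v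
  · rw [if_pos h, if_pos h.symm]
  · rw [if_neg h, if_neg fun h2 => h h2.symm]

private lemma invsqrt_nat_inj {x y : ℕ} :
    1 / Real.sqrt (x : ℝ) = 1 / Real.sqrt (y : ℝ) ↔ x = y := by
  rw [one_div, one_div, inv_inj, Real.sqrt_inj (Nat.cast_nonneg _) (Nat.cast_nonneg _),
    Nat.cast_inj]

theorem randic_lower_biregular [Fintype V] (G : SimpleGraph V) [DecidableRel G.Adj]
    (hiso : ∀ v : V, 0 < G.degree v) :
    randicIndex G ≥ (Fintype.card V : ℝ) / 2 -
      (G.edgeFinset.card : ℝ) / 2 *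
        (1 / Real.sqrt (G.minDegree : ℝ) - 1 / Real.sqrt (G.maxDegree : ℝ))^2 ∧
    (randicIndex G = (Fintype.card V : ℝ) / 2 -
        (G.edgeFinset.card : ℝ) / 2 *
          (1 / Real.sqrt (G.minDegree : ℝ) - 1 / Real.sqrt (G.maxDegree : ℝ))^2 ↔
      ∀ u v, G.Adj u v →
        ({G.degree u, G.degree v} : Set ℕ) = {G.minDegree, G.maxDegree}) := by
  classical
  set n : ℝ := (Fintype.card V : ℝ) with hn
  set m : ℝ := (G.edgeFinset.card : ℝ) with hm
  set c : ℝ := 1 / Real.sqrt (G.minDegree : ℝ) - 1 / Real.sqrt (G.maxDegree : ℝ) with hc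
  -- per-pair facts
  have hpair : ∀ u v, G.Adj u v →
      ((1 / Real.sqrt (G.degree u : ℝ) - 1 / Real.sqrt (G.degree v : ℝ))^2 ≤ c^2 ∧
       ((1 / Real.sqrt (G.degree u : ℝ) - 1 / Real.sqrt (G.degree v : ℝ))^2 = c^2 ↔
         ({G.degree u, G.degree v} : Set ℕ) = {G.minDegree, G.maxDegree})) := by
    intro u v huv
    have : Nonempty V := ⟨u⟩
    have bound : ∀ w : V, 1 / Real.sqrt (G.maxDegree : ℝ) ≤ 1 / Real.sqrt (G.degree w : ℝ)
        ∧ 1 / Real.sqrt (G.degree w : ℝ) ≤ 1 / Real.sqrt (G.minDegree : ℝ) := by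
      intro w
      have hw : (0 : ℝ) < (G.degree w : ℝ) := by exact_mod_cast hiso w
      have hδ : (0 : ℝ) < (G.minDegree : ℝ) := by
        obtain ⟨z, hz⟩ := G.exists_minimal_degree_vertex
        rw [hz]; exact_mod_cast hiso z
      constructor
      · exact one_div_le_one_div_of_le (Real.sqrt_pos.mpr hw)
          (Real.sqrt_le_sqrt (by exact_mod_cast G.degree_le_maxDegree w))
      · exact one_div_le_one_div_of_le (Real.sqrt_pos.mpr hδ)
          (Real.sqrt_le_sqrt (by exact_mod_cast G.minDegree_le_degree w))
    obtain ⟨hle, heq⟩ := interval_diff_sq (bound u).1 (bound u).2 (bound v).1 (bound v).2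
    refine ⟨hle, heq.trans ?_⟩
    constructor
    · rintro (⟨e1, e2⟩ | ⟨e1, e2⟩)
      · rw [invsqrt_nat_inj.mp e1, invsqrt_nat_inj.mp e2]
      · rw [invsqrt_nat_inj.mp e1, invsqrt_nat_inj.mp e2]
        exact (Set.pair_comm _ _)
    · intro hset
      have mu : G.degree u = G.minDegree ∨ G.degree u = G.maxDegree := by
        have hmem : G.degree u ∈ ({G.degree u, G.degree v} : Set ℕ) := by simp
        rw [hset] at hmem; simpa using hmem
      have mv : G.degree v = G.minDegree ∨ G.degree v = G.maxDegree := by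
        have hmem : G.degree v ∈ ({G.degree u, G.degree v} : Set ℕ) := by simp
        rw [hset] at hmem; simpa using hmem
      have mδ : G.minDegree = G.degree u ∨ G.minDegree = G.degree v := by
        have hmem : G.minDegree ∈ ({G.minDegree, G.maxDegree} : Set ℕ) := by simp
        rw [← hset] at hmem; simpa using hmem
      have mΔ : G.maxDegree = G.degree u ∨ G.maxDegree = G.degree v := by
        have hmem : G.maxDegree ∈ ({G.minDegree, G.maxDegree} : Set ℕ) := by simp
        rw [← hset] at hmem; simpa using hmem
      have : (G.degree u = G.minDegree ∧ G.degree v = G.maxDegree) ∨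
          (G.degree u = G.maxDegree ∧ G.degree v = G.minDegree) := by omega
      rcases this with ⟨e1, e2⟩ | ⟨e1, e2⟩
      · exact Or.inl ⟨invsqrt_nat_inj.mpr e1, invsqrt_nat_inj.mpr e2⟩
      · exact Or.inr ⟨invsqrt_nat_inj.mpr e1, invsqrt_nat_inj.mpr e2⟩
  -- decomposition of the Randić index
  have hterm : ∀ u : V, ∀ v ∈ G.neighborFinset u,
      1 / Real.sqrt ((G.degree u : ℝ) * (G.degree v : ℝ)) =
        (1 / (2 * (G.degree u : ℝ)) + 1 / (2 * (G.degree v : ℝ))) -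
          (1/2) * (1 / Real.sqrt (G.degree u : ℝ) - 1 / Real.sqrt (G.degree v : ℝ))^2 := by
    intro u v _
    have hu0 : (0 : ℝ) < (G.degree u : ℝ) := by exact_mod_cast hiso u
    have hv0 : (0 : ℝ) < (G.degree v : ℝ) := by exact_mod_cast hiso v
    have hsu : (0 : ℝ) < Real.sqrt (G.degree u : ℝ) := Real.sqrt_pos.mpr hu0
    have hsv : (0 : ℝ) < Real.sqrt (G.degree v : ℝ) := Real.sqrt_pos.mpr hv0
    have e1 : (1 / Real.sqrt (G.degree u : ℝ))^2 = 1 / (G.degree u : ℝ) := by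
      rw [div_pow, one_pow, Real.sq_sqrt hu0.le]
    have e2 : (1 / Real.sqrt (G.degree v : ℝ))^2 = 1 / (G.degree v : ℝ) := by
      rw [div_pow, one_pow, Real.sq_sqrt hv0.le]
    have e3 : (1 / Real.sqrt (G.degree u : ℝ)) * (1 / Real.sqrt (G.degree v : ℝ))
        = 1 / (Real.sqrt (G.degree u : ℝ) * Real.sqrt (G.degree v : ℝ)) := by
      rw [div_mul_div_comm, one_mul]
    have expand : (1 / Real.sqrt (G.degree u : ℝ) - 1 / Real.sqrt (G.degree v : ℝ))^2
        = 1 / (G.degree u : ℝ) + 1 / (G.degree v : ℝ)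
          - 2 * (1 / (Real.sqrt (G.degree u : ℝ) * Real.sqrt (G.degree v : ℝ))) := by
      rw [sub_sq, e1, e2, mul_assoc, e3]; ring
    rw [Real.sqrt_mul (Nat.cast_nonneg _), expand]
    ring
  have hA : ∀ u : V, ∑ v ∈ G.neighborFinset u, 1 / (2 * (G.degree u : ℝ)) = 1/2 := by
    intro u
    rw [Finset.sum_const, G.card_neighborFinset_eq_degree, nsmul_eq_mul]
    have h0 : (G.degree u : ℝ) ≠ 0 := by
      exact_mod_cast (hiso u).ne'
    field_simp
  have hdecomp : randicIndex G = n / 2 - (1/4) *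
      ∑ u, ∑ v ∈ G.neighborFinset u,
        (1 / Real.sqrt (G.degree u : ℝ) - 1 / Real.sqrt (G.degree v : ℝ))^2 := by
    rw [randicIndex]
    rw [Finset.sum_congr rfl fun u _ => Finset.sum_congr rfl (hterm u)]
    simp only [Finset.sum_sub_distrib, Finset.sum_add_distrib, ← Finset.mul_sum]
    rw [sum_adj_comm G (fun u v => 1 / (2 * (G.degree v : ℝ)))]
    rw [Finset.sum_congr rfl fun u _ => hA u, Finset.sum_const, nsmul_eq_mul,
      Finset.card_univ]
    rw [hn]
    ring
  have hT2 : ∑ u : V, ∑ _v ∈ G.neighborFinset u, c^2 = 2 * m * c^2 := by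
    have : ∀ u : V, ∑ _v ∈ G.neighborFinset u, c^2 = (G.degree u : ℝ) * c^2 := by
      intro u
      rw [Finset.sum_const, G.card_neighborFinset_eq_degree, nsmul_eq_mul]
    rw [Finset.sum_congr rfl fun u _ => this u, ← Finset.sum_mul]
    have hd : ∑ u : V, (G.degree u : ℝ) = 2 * m := by
      rw [hm]
      exact_mod_cast G.sum_degrees_eq_twice_card_edges
    rw [hd]
  set E : ℝ := ∑ u, ∑ v ∈ G.neighborFinset u,
      (c^2 - (1 / Real.sqrt (G.degree u : ℝ) - 1 / Real.sqrt (G.degree v : ℝ))^2) with hE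
  have key : randicIndex G - (n / 2 - m / 2 * c^2) = (1/4) * E := by
    rw [hdecomp, hE]
    simp only [Finset.sum_sub_distrib]
    rw [hT2]
    ring
  have hnonneg : ∀ u ∈ (univ : Finset V), ∀ v ∈ G.neighborFinset u,
      (0:ℝ) ≤ c^2 - (1 / Real.sqrt (G.degree u : ℝ) - 1 / Real.sqrt (G.degree v : ℝ))^2 := by
    intro u _ v hv
    exact sub_nonneg.mpr (hpair u v ((G.mem_neighborFinset u v).mp hv)).1
  have hEnonneg : 0 ≤ E := by
    rw [hE]
    exact Finset.sum_nonneg fun u hu => Finset.sum_nonneg fun v hv => hnonneg u hu v hv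
  constructor
  · linarith
  · constructor
    · intro h
      have hE0 : E = 0 := by linarith
      intro u v huv
      have h1 := (Finset.sum_eq_zero_iff_of_nonneg
        (fun u hu => Finset.sum_nonneg fun v hv => hnonneg u hu v hv)).mp (hE ▸ hE0) u
        (mem_univ u)
      have h2 := (Finset.sum_eq_zero_iff_of_nonneg
        (fun v hv => hnonneg u (mem_univ u) v hv)).mp h1 v
        ((G.mem_neighborFinset u v).mpr huv)
      exact (hpair u v huv).2.mp (by linarith)
    · intro h
      have hE0 : E = 0 := by
        rw [hE]
        refine Finset.sum_eq_zero fun u _ => Finset.sum_eq_zero fun v hv => ?_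
        have huv := (G.mem_neighborFinset u v).mp hv
        have := (hpair u v huv).2.mpr (h u v huv)
        linarith
      linarith
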